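/- arXiv:2009.11570 — 2 statements merged into one kernel-verified Lean document; each statement's English description precedes it below -/
import Mathlib

section
/- Let X be a complete metric space and E a Banach space. If ((x_n,e_n))_{n=1}^∞ is a u-sequence in X × E, then there exist an infinite subset N of ℕ and a uniformly continuous function f: X → E such that f(x_n) = e_n for all n ∈ N. -/
open ENNReal

namespace Stmt12

/-- The chain "metric" `d_ε(a,b)`. -/
noncomputable def chainDist {X : Type*} [MetricSpace X] (ε : ℝ) (a b : X) : ℝ≥0∞ :=
  ⨅ (n : ℕ) (x : ℕ → X) (_ : x 0 = a) (_ : x n = b)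
    (_ : ∀ i < n, dist (x i) (x (i + 1)) ≤ ε),
    ∑ i ∈ Finset.range n, ENNReal.ofReal (dist (x i) (x (i + 1)))

/-- A sequence is separated if its terms are uniformly spaced apart. -/
def Separated {X : Type*} [MetricSpace X] (x : ℕ → X) : Prop :=
  ∃ δ : ℝ, 0 < δ ∧ ∀ m n : ℕ, m ≠ n → δ ≤ dist (x m) (x n)

/-- `((x_n, e_n))` is a u-sequence: `(x_n)` is separated and the `e_n` are
`C·d_ε`-Lipschitz-related to the `x_n`. -/
def USequence {X E : Type*} [MetricSpace X] [NormedAddCommGroup E]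
    (x : ℕ → X) (e : ℕ → E) : Prop :=
  Separated x ∧ ∃ ε : ℝ, 0 < ε ∧ ∃ C : ℝ, ∀ m n : ℕ,
    ENNReal.ofReal ‖e n - e m‖ ≤ ENNReal.ofReal C * chainDist ε (x n) (x m)

section Helpers

variable {X : Type*} [MetricSpace X]

lemma chainDist_self (ε : ℝ) (a : X) : chainDist ε a a = 0 := by
  refine le_antisymm ?_ zero_le
  unfold chainDist
  refine iInf_le_of_le 0 (iInf_le_of_le (fun _ => a) ?_)
  refine iInf_le_of_le rfl (iInf_le_of_le rfl (iInf_le_of_le (by simp) ?_))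
  simp

lemma chainDist_le_of_dist_le {ε : ℝ} {a b : X} (h : dist a b ≤ ε) :
    chainDist ε a b ≤ ENNReal.ofReal (dist a b) := by
  unfold chainDist
  refine iInf_le_of_le 1 (iInf_le_of_le (fun i => if i = 0 then a else b) ?_)
  refine iInf_le_of_le (by simp) (iInf_le_of_le (by simp) (iInf_le_of_le ?_ ?_))
  · intro i hi
    interval_cases i
    simpa using h
  · simp

lemma chainDist_comm (ε : ℝ) (a b : X) : chainDist ε a b = chainDist ε b a := by
  have key : ∀ (u v : X), chainDist ε u v ≤ chainDist ε v u := by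
    intro u v
    conv_rhs => unfold chainDist
    refine le_iInf fun n => le_iInf fun y => le_iInf fun h1 => le_iInf fun h2 =>
      le_iInf fun h3 => ?_
    unfold chainDist
    refine iInf_le_of_le n (iInf_le_of_le (fun i => y (n - i)) ?_)
    refine iInf_le_of_le (by simp [h2]) (iInf_le_of_le (by simp [h1]) (iInf_le_of_le ?_ ?_))
    · intro i hi
      have h4 : n - i = (n - 1 - i) + 1 := by omega
      have h5 : n - (i + 1) = n - 1 - i := by omega
      show dist (y (n - i)) (y (n - (i + 1))) ≤ ε
      rw [h4, h5, dist_comm]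
      exact h3 _ (by omega)
    · rw [← Finset.sum_range_reflect (fun j => ENNReal.ofReal (dist (y j) (y (j + 1)))) n]
      refine le_of_eq (Finset.sum_congr rfl fun i hi => ?_)
      simp only [Finset.mem_range] at hi
      have h4 : n - i = (n - 1 - i) + 1 := by omega
      have h5 : n - (i + 1) = n - 1 - i := by omega
      show ENNReal.ofReal (dist (y (n - i)) (y (n - (i + 1)))) = _
      rw [h4, h5, dist_comm]
  exact le_antisymm (key a b) (key b a)

lemma chainDist_lt_iff {ε : ℝ} {a b : X} {r : ℝ≥0∞} :
    chainDist ε a b < r ↔ ∃ (n : ℕ) (y : ℕ → X), y 0 = a ∧ y n = b ∧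
      (∀ i < n, dist (y i) (y (i + 1)) ≤ ε) ∧
      ∑ i ∈ Finset.range n, ENNReal.ofReal (dist (y i) (y (i + 1))) < r := by
  simp only [chainDist, iInf_lt_iff, exists_prop]

lemma chainDist_triangle (ε : ℝ) (a b c : X) :
    chainDist ε a c ≤ chainDist ε a b + chainDist ε b c := by
  rcases eq_or_ne (chainDist ε a b + chainDist ε b c) ⊤ with htop | htop
  · rw [htop]; exact le_top
  have hab : chainDist ε a b ≠ ⊤ := fun h => htop (by simp [h])
  have hbc : chainDist ε b c ≠ ⊤ := fun h => htop (by simp [h])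
  refine ENNReal.le_of_forall_pos_le_add fun η hη _ => ?_
  have hη2 : (0:ℝ≥0∞) < (η:ℝ≥0∞) / 2 := by
    simp [ENNReal.div_pos_iff, hη.ne']
  have h1 : chainDist ε a b < chainDist ε a b + η / 2 :=
    ENNReal.lt_add_right hab hη2.ne'
  have h2 : chainDist ε b c < chainDist ε b c + η / 2 :=
    ENNReal.lt_add_right hbc hη2.ne'
  obtain ⟨n, xx, hx0, hxn, hxs, hxsum⟩ := chainDist_lt_iff.mp h1
  obtain ⟨m, yy, hy0, hym, hys, hysum⟩ := chainDist_lt_iff.mp h2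
  set z : ℕ → X := fun i => if i ≤ n then xx i else yy (i - n) with hz
  have hzx : ∀ i ≤ n, z i = xx i := fun i hi => if_pos hi
  have hzy : ∀ i, n ≤ i → z i = yy (i - n) := by
    intro i hi
    rcases eq_or_lt_of_le hi with h | h
    · rw [← h]
      simp [hz, hxn, hy0]
    · exact if_neg (by omega)
  have hstep : ∀ i < n + m, dist (z i) (z (i + 1)) ≤ ε := by
    intro i hi
    by_cases hcase : i < n
    · rw [hzx i (by omega), hzx (i + 1) (by omega)]
      exact hxs i hcase
    · push_neg at hcase
      rw [hzy i hcase, hzy (i + 1) (by omega)]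
      have : i + 1 - n = (i - n) + 1 := by omega
      rw [this]
      exact hys _ (by omega)
  have hmain : chainDist ε a c ≤
      ∑ i ∈ Finset.range (n + m), ENNReal.ofReal (dist (z i) (z (i + 1))) := by
    unfold chainDist
    refine iInf_le_of_le (n + m) (iInf_le_of_le z ?_)
    refine iInf_le_of_le (by rw [hzx 0 (by omega), hx0])
      (iInf_le_of_le ?_ (iInf_le_of_le hstep le_rfl))
    · rw [hzy (n + m) (by omega)]
      simpa using hym
  refine hmain.trans ?_
  rw [Finset.sum_range_add]
  have e1 : ∑ i ∈ Finset.range n, ENNReal.ofReal (dist (z i) (z (i + 1)))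
      = ∑ i ∈ Finset.range n, ENNReal.ofReal (dist (xx i) (xx (i + 1))) := by
    refine Finset.sum_congr rfl fun i hi => ?_
    simp only [Finset.mem_range] at hi
    rw [hzx i (by omega), hzx (i + 1) (by omega)]
  have e2 : ∑ i ∈ Finset.range m, ENNReal.ofReal (dist (z (n + i)) (z (n + i + 1)))
      = ∑ i ∈ Finset.range m, ENNReal.ofReal (dist (yy i) (yy (i + 1))) := by
    refine Finset.sum_congr rfl fun i hi => ?_
    simp only [Finset.mem_range] at hi
    have g1 : n + i - n = i := by omega
    have g2 : n + i + 1 - n = i + 1 := by omega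
    rw [hzy (n + i) (by omega), hzy (n + i + 1) (by omega), g1, g2]
  rw [e1, e2]
  calc ∑ i ∈ Finset.range n, ENNReal.ofReal (dist (xx i) (xx (i + 1)))
        + ∑ i ∈ Finset.range m, ENNReal.ofReal (dist (yy i) (yy (i + 1)))
      ≤ (chainDist ε a b + η / 2) + (chainDist ε b c + η / 2) :=
        add_le_add hxsum.le hysum.le
    _ = chainDist ε a b + chainDist ε b c + η := by
        rw [add_add_add_comm, ENNReal.add_halves]


lemma uc_of_scale {Y E : Type*} [MetricSpace Y] [NormedAddCommGroup E]
    (f : Y → E) (ε K : ℝ) (hε : 0 < ε)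
    (h : ∀ y z, dist y z ≤ ε → dist (f y) (f z) ≤ K * dist y z) :
    UniformContinuous f := by
  rw [Metric.uniformContinuous_iff]
  intro η hη
  have hK1 : (0:ℝ) < max K 1 := lt_max_of_lt_right one_pos
  refine ⟨min ε (η / max K 1), by positivity, fun {y z} hd => ?_⟩
  have h1 : dist y z ≤ ε := le_of_lt (lt_of_lt_of_le hd (min_le_left _ _))
  have h2 : dist y z < η / max K 1 := lt_of_lt_of_le hd (min_le_right _ _)
  calc dist (f y) (f z) ≤ K * dist y z := h _ _ h1
    _ ≤ max K 1 * dist y z := mul_le_mul_of_nonneg_right (le_max_left _ _) dist_nonneg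
    _ < max K 1 * (η / max K 1) := mul_lt_mul_of_pos_left h2 hK1
    _ = η := by field_simp

lemma norm_le_of_ofReal_le {u C : ℝ} (hC : 0 ≤ C) {ρ : ℝ≥0∞} (hρ : ρ ≠ ⊤)
    (h : ENNReal.ofReal u ≤ ENNReal.ofReal C * ρ) (hu : 0 ≤ u) : u ≤ C * ρ.toReal := by
  have hfin : ENNReal.ofReal C * ρ ≠ ⊤ := ENNReal.mul_ne_top ENNReal.ofReal_ne_top hρ
  have := ENNReal.toReal_mono hfin h
  rwa [ENNReal.toReal_ofReal hu, ENNReal.toReal_mul, ENNReal.toReal_ofReal hC] at this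

lemma hats {Y E : Type*} [MetricSpace Y] [NormedAddCommGroup E] [NormedSpace ℝ E]
    (p : ℕ → Y) (v : ℕ → E) (s : ℕ → ℝ) (K : ℝ)
    (hs : ∀ k, 0 < s k) (hK : 0 ≤ K)
    (hdisj : ∀ j k (y : Y), j ≠ k → dist y (p j) < s j → ¬ dist y (p k) < s k)
    (hv : ∀ k, ‖v k‖ ≤ K * s k) :
    ∃ g : Y → E, (∀ y z, dist (g y) (g z) ≤ (2 * K) * dist y z) ∧ ∀ k, g (p k) = v k := by
  classical
  set φ : ℕ → Y → ℝ := fun k y => max (1 - dist y (p k) / s k) 0 with hφdef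
  have hφ_lip : ∀ k (y z : Y), |φ k y - φ k z| ≤ dist y z / s k := by
    intro k y z
    have h1 : |φ k y - φ k z| ≤ |(1 - dist y (p k) / s k) - (1 - dist z (p k) / s k)| :=
      abs_max_sub_max_le_abs _ _ _
    have h2 : (1 - dist y (p k) / s k) - (1 - dist z (p k) / s k)
        = (dist z (p k) - dist y (p k)) / s k := by ring
    refine h1.trans ?_
    rw [h2, abs_div, abs_of_pos (hs k)]
    gcongr
    · exact (hs k).le
    · rw [abs_sub_comm]
      exact abs_dist_sub_le _ _ _
  have hφ_zero : ∀ k (y : Y), ¬ dist y (p k) < s k → φ k y = 0 := by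
    intro k y hy
    push_neg at hy
    have : 1 - dist y (p k) / s k ≤ 0 := by
      rw [sub_nonpos, le_div_iff₀ (hs k), one_mul]
      exact hy
    simp [hφdef, max_eq_right this]
  have hφ_nonneg : ∀ k (y : Y), 0 ≤ φ k y := fun k y => le_max_right _ _
  have hterm : ∀ k (y z : Y), ‖φ k y • v k - φ k z • v k‖ ≤ K * dist y z := by
    intro k y z
    rw [← sub_smul, norm_smul, Real.norm_eq_abs]
    calc |φ k y - φ k z| * ‖v k‖ ≤ (dist y z / s k) * (K * s k) :=
          mul_le_mul (hφ_lip k y z) (hv k) (norm_nonneg _)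
            (div_nonneg dist_nonneg (hs k).le)
      _ = K * dist y z := by
          field_simp
          rw [mul_assoc, mul_div_assoc, mul_div_cancel_left₀ K (hs k).ne']
  let g : Y → E := fun y => if h : ∃ k, dist y (p k) < s k then φ h.choose y • v h.choose else 0
  have hgpos : ∀ (w : Y) (hw : ∃ k, dist w (p k) < s k),
      g w = φ hw.choose w • v hw.choose := fun w hw => dif_pos hw
  have hgneg : ∀ (w : Y), (¬ ∃ k, dist w (p k) < s k) → g w = 0 := fun w hw => dif_neg hw
  refine ⟨g, fun y z => ?_, fun k => ?_⟩
  · by_cases hy : ∃ k, dist y (p k) < s k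
    · by_cases hz : ∃ k, dist z (p k) < s k
      · rw [hgpos y hy, hgpos z hz, dist_eq_norm]
        set n := hy.choose with hn
        set m := hz.choose with hm
        have hny : dist y (p n) < s n := hy.choose_spec
        have hmz : dist z (p m) < s m := hz.choose_spec
        by_cases hnm : n = m
        · rw [← hnm]
          calc ‖φ n y • v n - φ n z • v n‖ ≤ K * dist y z := hterm n y z
            _ ≤ 2 * K * dist y z := by nlinarith [dist_nonneg (x := y) (y := z)]
        · have hnz : φ n z = 0 := hφ_zero n z (hdisj m n z (Ne.symm hnm) hmz)
          have hmy : φ m y = 0 := hφ_zero m y (hdisj n m y hnm hny)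
          calc ‖φ n y • v n - φ m z • v m‖
              ≤ ‖φ n y • v n - φ n z • v n‖ + ‖φ m z • v m - φ m y • v m‖ := by
                rw [hnz, hmy]
                simp only [zero_smul, sub_zero, zero_sub, norm_neg]
                exact norm_sub_le _ _
            _ ≤ K * dist y z + K * dist z y := add_le_add (hterm n y z) (hterm m z y)
            _ = 2 * K * dist y z := by rw [dist_comm z y]; ring
      · rw [hgpos y hy, hgneg z hz, dist_eq_norm, sub_zero]
        set n := hy.choose with hn
        have hny : dist y (p n) < s n := hy.choose_spec
        have hnz : φ n z = 0 := hφ_zero n z (fun hc => hz ⟨n, hc⟩)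
        calc ‖φ n y • v n‖ = ‖φ n y • v n - φ n z • v n‖ := by rw [hnz]; simp
          _ ≤ K * dist y z := hterm n y z
          _ ≤ 2 * K * dist y z := by nlinarith [dist_nonneg (x := y) (y := z)]
    · by_cases hz : ∃ k, dist z (p k) < s k
      · rw [hgneg y hy, hgpos z hz, dist_eq_norm, zero_sub, norm_neg]
        set m := hz.choose with hm
        have hmz : dist z (p m) < s m := hz.choose_spec
        have hmy : φ m y = 0 := hφ_zero m y (fun hc => hy ⟨m, hc⟩)
        calc ‖φ m z • v m‖ = ‖φ m z • v m - φ m y • v m‖ := by rw [hmy]; simp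
          _ ≤ K * dist z y := hterm m z y
          _ ≤ 2 * K * dist y z := by rw [dist_comm z y]; nlinarith [dist_nonneg (x := y) (y := z)]
      · rw [hgneg y hy, hgneg z hz, dist_self]
        positivity
  · have hk : ∃ j, dist (p k) (p j) < s j := ⟨k, by simpa [dist_self] using hs k⟩
    rw [hgpos (p k) hk]
    have hspec : dist (p k) (p hk.choose) < s hk.choose := hk.choose_spec
    have hck : hk.choose = k := by
      by_contra hne
      exact hdisj hk.choose k (p k) hne hspec (by simpa [dist_self] using hs k)
    rw [hck]
    have : φ k (p k) = 1 := by simp [hφdef, dist_self, hs k]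
    rw [this, one_smul]

noncomputable def diagPick (S : ℕ → Set ℕ) : ℕ → ℕ
  | k => sInf {m | ∀ j, j < k → m ∉ S (diagPick S j)}

lemma diagPick_spec (S : ℕ → Set ℕ) (hfin : ∀ n, (S n).Finite) :
    ∀ k j, j < k → diagPick S k ∉ S (diagPick S j) := by
  intro k j hjk
  have hne : {m | ∀ j, j < k → m ∉ S (diagPick S j)}.Nonempty := by
    have hf : (⋃ j ∈ Set.Iio k, S (diagPick S j)).Finite :=
      Set.Finite.biUnion (Set.finite_Iio k) (fun j _ => hfin _)
    obtain ⟨m, hm⟩ := hf.infinite_compl.nonempty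
    refine ⟨m, fun i hi hmem => hm ?_⟩
    exact Set.mem_biUnion hi hmem
  have heq : diagPick S k = sInf {m | ∀ j, j < k → m ∉ S (diagPick S j)} := by
    conv_lhs => rw [diagPick]
  rw [heq]
  exact Nat.sInf_mem hne j hjk


end Helpers

/-- Any u-sequence admits a uniformly continuous function interpolating it along an
infinite subset of indices. -/
theorem stmt12 {X E : Type*} [MetricSpace X] [CompleteSpace X]
    [NormedAddCommGroup E] [NormedSpace ℝ E] [CompleteSpace E]
    (x : ℕ → X) (e : ℕ → E) (h : USequence x e) :
    ∃ N : Set ℕ, N.Infinite ∧ ∃ f : X → E, UniformContinuous f ∧ ∀ n ∈ N, f (x n) = e n := by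
  classical
  obtain ⟨⟨δ, hδ, hsep⟩, ε, hε, C, hC0⟩ := h
  set C' := max C 0 with hC'def
  have hC' : (0:ℝ) ≤ C' := le_max_right _ _
  have hC : ∀ m n : ℕ, ENNReal.ofReal ‖e n - e m‖ ≤ ENNReal.ofReal C' * chainDist ε (x n) (x m) :=
    fun m n => (hC0 m n).trans
      (mul_le_mul_left (ENNReal.ofReal_le_ofReal (le_max_left _ _)) _)
  have hfin_dist : ∀ (y z : X), dist y z ≤ ε → chainDist ε y z ≠ ⊤ := fun y z hd =>
    ne_top_of_le_ne_top ENNReal.ofReal_ne_top (chainDist_le_of_dist_le hd)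
  by_cases HA : ∀ n : ℕ, {m : ℕ | chainDist ε (x n) (x m) ≠ ⊤}.Finite
  · -- Case A : all chain-classes finite; pick pairwise chain-disconnected indices
    set S : ℕ → Set ℕ := fun n => {m | chainDist ε (x n) (x m) ≠ ⊤} with hS
    set ψ : ℕ → ℕ := diagPick S with hψ
    have hspec : ∀ k j, j < k → chainDist ε (x (ψ j)) (x (ψ k)) = ⊤ := by
      intro k j hjk
      have := diagPick_spec S HA k j hjk
      simpa [hS, not_not] using this
    have hψne : ∀ j k, j < k → ψ j ≠ ψ k := by
      intro j k hjk heq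
      have h1 := hspec k j hjk
      rw [heq, chainDist_self] at h1
      exact ENNReal.zero_ne_top h1
    have hψinj : Function.Injective ψ := by
      intro j k heq
      by_contra hne
      rcases lt_or_gt_of_ne hne with hlt | hlt
      · exact hψne j k hlt heq
      · exact hψne k j hlt heq.symm
    have hpair : ∀ j k, j ≠ k → chainDist ε (x (ψ j)) (x (ψ k)) = ⊤ := by
      intro j k hjk
      rcases lt_or_gt_of_ne hjk with hlt | hlt
      · exact hspec k j hlt
      · rw [chainDist_comm]; exact hspec j k hlt
    have huniq : ∀ (y : X) j k, chainDist ε (x (ψ j)) y ≠ ⊤ →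
        chainDist ε (x (ψ k)) y ≠ ⊤ → j = k := by
      intro y j k hj hk
      by_contra hne
      have h1 := chainDist_triangle ε (x (ψ j)) y (x (ψ k))
      have h2 : chainDist ε y (x (ψ k)) ≠ ⊤ := by rw [chainDist_comm]; exact hk
      rw [hpair j k hne] at h1
      exact ENNReal.add_ne_top.mpr ⟨hj, h2⟩ (top_le_iff.mp h1)
    have htrans : ∀ (y z : X), dist y z ≤ ε → ∀ k,
        chainDist ε (x (ψ k)) y ≠ ⊤ → chainDist ε (x (ψ k)) z ≠ ⊤ := by
      intro y z hd k hk htop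
      have h1 := chainDist_triangle ε (x (ψ k)) y z
      rw [htop] at h1
      exact ENNReal.add_ne_top.mpr ⟨hk, hfin_dist y z hd⟩ (top_le_iff.mp h1)
    let f : X → E := fun y => if h : ∃ k, chainDist ε (x (ψ k)) y ≠ ⊤ then e (ψ h.choose) else 0
    have hfpos : ∀ (y : X) (hy : ∃ k, chainDist ε (x (ψ k)) y ≠ ⊤),
        f y = e (ψ hy.choose) := fun y hy => dif_pos hy
    have hfneg : ∀ (y : X), (¬ ∃ k, chainDist ε (x (ψ k)) y ≠ ⊤) → f y = 0 :=
      fun y hy => dif_neg hy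
    have hflocal : ∀ y z, dist y z ≤ ε → f y = f z := by
      intro y z hd
      by_cases hy : ∃ k, chainDist ε (x (ψ k)) y ≠ ⊤
      · have hz : ∃ k, chainDist ε (x (ψ k)) z ≠ ⊤ :=
          ⟨hy.choose, htrans y z hd _ hy.choose_spec⟩
        rw [hfpos y hy, hfpos z hz]
        have : hy.choose = hz.choose :=
          huniq z _ _ (htrans y z hd _ hy.choose_spec) hz.choose_spec
        rw [this]
      · have hz : ¬ ∃ k, chainDist ε (x (ψ k)) z ≠ ⊤ := by
          rintro ⟨k, hk⟩
          exact hy ⟨k, htrans z y (by rw [dist_comm]; exact hd) k hk⟩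
        rw [hfneg y hy, hfneg z hz]
    refine ⟨Set.range ψ, Set.infinite_range_of_injective hψinj, f, ?_, ?_⟩
    · refine uc_of_scale f ε 0 hε (fun y z hd => ?_)
      rw [hflocal y z hd, dist_self]
      simp [dist_nonneg]
    · rintro n ⟨k, rfl⟩
      have hself : chainDist ε (x (ψ k)) (x (ψ k)) ≠ ⊤ := by
        rw [chainDist_self]; exact ENNReal.zero_ne_top
      have hk : ∃ j, chainDist ε (x (ψ j)) (x (ψ k)) ≠ ⊤ := ⟨k, hself⟩
      rw [hfpos _ hk]
      have : hk.choose = k := huniq _ _ _ hk.choose_spec hself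
      rw [this]
  · -- Case B : some chain-class is infinite
    push_neg at HA
    obtain ⟨b, hSb⟩ := HA
    have hSb' : ({m : ℕ | chainDist ε (x b) (x m) ≠ ⊤} : Set ℕ).Infinite := hSb
    by_cases HB : ∃ M : ℝ, ∀ m : ℕ, chainDist ε (x b) (x m) ≠ ⊤ →
        (chainDist ε (x b) (x m)).toReal ≤ M
    · -- Case B1 : bounded chain distances, so bounded values; use hats on X
      obtain ⟨M, hM⟩ := HB
      set M' := max M 0 with hM'def
      have hM' : (0:ℝ) ≤ M' := le_max_right _ _
      set emb := Set.Infinite.natEmbedding _ hSb' with hemb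
      set ψ : ℕ → ℕ := fun k => (emb k : ℕ) with hψ
      have hψmem : ∀ k, chainDist ε (x b) (x (ψ k)) ≠ ⊤ := fun k => (emb k).2
      have hψinj : Function.Injective ψ := fun j k hjk =>
        emb.injective (Subtype.ext hjk)
      have hbound : ∀ k, ‖e (ψ k)‖ ≤ ‖e b‖ + C' * M' := by
        intro k
        have h1 := hC b (ψ k)
        rw [chainDist_comm] at h1
        have h2 := norm_le_of_ofReal_le hC' (hψmem k) h1 (norm_nonneg _)
        have h3 : (chainDist ε (x b) (x (ψ k))).toReal ≤ M' :=
          le_trans (hM (ψ k) (hψmem k)) (le_max_left _ _)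
        have h4 := norm_sub_norm_le (e (ψ k)) (e b)
        have h5 : C' * (chainDist ε (x b) (x (ψ k))).toReal ≤ C' * M' :=
          mul_le_mul_of_nonneg_left h3 hC'
        linarith
      have hB0 : (0:ℝ) ≤ ‖e b‖ + C' * M' :=
        add_nonneg (norm_nonneg _) (mul_nonneg hC' hM')
      have hr : (0:ℝ) < δ/3 := by linarith
      set K : ℝ := (‖e b‖ + C' * M') / (δ/3) with hKdef
      have hK : (0:ℝ) ≤ K := div_nonneg hB0 hr.le
      have hdisj : ∀ j k (y : X), j ≠ k →
          dist y (x (ψ j)) < δ/3 → ¬ dist y (x (ψ k)) < δ/3 := by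
        intro j k y hjk h1 h2
        have hne : ψ j ≠ ψ k := fun he => hjk (hψinj he)
        have hd := hsep (ψ j) (ψ k) hne
        have ht := dist_triangle (x (ψ j)) y (x (ψ k))
        rw [dist_comm y (x (ψ j))] at h1
        linarith
      have hv : ∀ k, ‖e (ψ k)‖ ≤ K * (δ/3) := by
        intro k
        rw [hKdef, div_mul_cancel₀ _ hr.ne']
        exact hbound k
      obtain ⟨g, hg1, hg2⟩ := hats (fun k => x (ψ k)) (fun k => e (ψ k)) (fun _ => δ/3) K
        (fun _ => hr) hK hdisj hv
      exact ⟨Set.range ψ, Set.infinite_range_of_injective hψinj, g,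
        uc_of_scale g 1 (2*K) one_pos (fun y z _ => hg1 y z),
        by rintro n ⟨k, rfl⟩; exact hg2 k⟩
    · -- Case B2 : unbounded chain distances; use hats on ℝ composed with chain distance
      push_neg at HB
      choose P hP1 hP2 using HB
      set φ : ℕ → ℕ := fun k =>
        Nat.rec b (fun _ prev => P (4 * (chainDist ε (x b) (x prev)).toReal + 4)) k with hφdef
      have hφ0 : φ 0 = b := rfl
      have hφs : ∀ k, φ (k + 1) = P (4 * (chainDist ε (x b) (x (φ k))).toReal + 4) :=
        fun k => rfl
      set t : ℕ → ℝ := fun k => (chainDist ε (x b) (x (φ k))).toReal with htdef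
      have hfin : ∀ k, chainDist ε (x b) (x (φ k)) ≠ ⊤ := by
        intro k
        cases k with
        | zero => rw [hφ0, chainDist_self]; exact ENNReal.zero_ne_top
        | succ k => rw [hφs]; exact hP1 _
      have hgrow : ∀ k, 4 * t k + 4 < t (k + 1) := by
        intro k
        have h1 := hP2 (4 * t k + 4)
        have h2 : t (k + 1) = (chainDist ε (x b) (x (P (4 * t k + 4)))).toReal := rfl
        rw [h2]
        exact h1
      have ht0 : t 0 = 0 := by
        show (chainDist ε (x b) (x (φ 0))).toReal = 0
        rw [hφ0, chainDist_self]
        simp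
      have htnn : ∀ k, 0 ≤ t k := fun k => ENNReal.toReal_nonneg
      have htmono : StrictMono t :=
        strictMono_nat_of_lt_succ (fun k => by nlinarith [htnn k, hgrow k])
      have hφinj : Function.Injective φ := by
        intro j k hjk
        have : t j = t k := by rw [htdef]; simp only [hjk]
        exact htmono.injective this
      set s : ℕ → ℝ := fun k => (t k + 1)/4 with hsdef
      have hs : ∀ k, 0 < s k := fun k => by
        have := htnn k
        rw [hsdef]
        positivity
      set K : ℝ := 4 * (‖e b‖ + C') with hKdef
      have hK : (0:ℝ) ≤ K := by
        have := norm_nonneg (e b)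
        rw [hKdef]; linarith
      have hv : ∀ k, ‖e (φ k)‖ ≤ K * s k := by
        intro k
        have h1 := hC b (φ k)
        rw [chainDist_comm] at h1
        have h2 := norm_le_of_ofReal_le hC' (hfin k) h1 (norm_nonneg _)
        have h4 := norm_sub_norm_le (e (φ k)) (e b)
        have h5 : K * s k = (‖e b‖ + C') * (t k + 1) := by
          rw [hKdef, hsdef]; ring
        rw [h5]
        nlinarith [htnn k, norm_nonneg (e b)]
      have hcons : ∀ k, t k + s k ≤ t (k + 1) - s (k + 1) := by
        intro k
        have h1 := hgrow k
        rw [hsdef]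
        simp only
        nlinarith [htnn k]
      have hsep2 : ∀ j k, j < k → t j + s j ≤ t k - s k := by
        intro j k hjk
        induction k with
        | zero => omega
        | succ k ih =>
          rcases Nat.lt_succ_iff_lt_or_eq.mp hjk with hlt | heq
          · exact le_trans (ih hlt) (le_trans (by nlinarith [hs k]) (hcons k))
          · rw [heq]; exact hcons k
      have hdisj : ∀ j k (y : ℝ), j ≠ k → dist y (t j) < s j → ¬ dist y (t k) < s k := by
        intro j k y hjk h1 h2
        rw [Real.dist_eq] at h1 h2
        rcases abs_lt.mp h1 with ⟨h1a, h1b⟩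
        rcases abs_lt.mp h2 with ⟨h2a, h2b⟩
        rcases lt_or_gt_of_ne hjk with hlt | hlt
        · have := hsep2 j k hlt; linarith
        · have := hsep2 k j hlt; linarith
      obtain ⟨g, hg1, hg2⟩ := hats (fun k => t k) (fun k => e (φ k)) s K hs hK hdisj hv
      let f : X → E := fun y =>
        if chainDist ε (x b) y = ⊤ then 0 else g ((chainDist ε (x b) y).toReal)
      have hfpos : ∀ (y : X), chainDist ε (x b) y ≠ ⊤ →
          f y = g ((chainDist ε (x b) y).toReal) := fun y hy => if_neg hy
      have hfneg : ∀ (y : X), chainDist ε (x b) y = ⊤ → f y = 0 := fun y hy => if_pos hy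
      have hftrans : ∀ (y z : X), dist y z ≤ ε →
          chainDist ε (x b) y ≠ ⊤ → chainDist ε (x b) z ≠ ⊤ := by
        intro y z hd hy htop
        have h1 := chainDist_triangle ε (x b) y z
        rw [htop] at h1
        exact ENNReal.add_ne_top.mpr ⟨hy, hfin_dist y z hd⟩ (top_le_iff.mp h1)
      have hUC : UniformContinuous f := by
        refine uc_of_scale f ε (2*K) hε (fun y z hd => ?_)
        by_cases hy : chainDist ε (x b) y = ⊤
        · have hz : chainDist ε (x b) z = ⊤ := by
            by_contra hz
            exact (hftrans z y (by rw [dist_comm]; exact hd) hz) hy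
          rw [hfneg y hy, hfneg z hz, dist_self]
          positivity
        · have hz : chainDist ε (x b) z ≠ ⊤ := hftrans y z hd hy
          rw [hfpos y hy, hfpos z hz]
          have key : dist ((chainDist ε (x b) y).toReal) ((chainDist ε (x b) z).toReal)
              ≤ dist y z := by
            rw [Real.dist_eq, abs_le]
            have e1 : chainDist ε (x b) z ≤ chainDist ε (x b) y + ENNReal.ofReal (dist y z) :=
              le_trans (chainDist_triangle ε (x b) y z)
                (add_le_add_right (chainDist_le_of_dist_le hd) _)
            have e2 : chainDist ε (x b) y ≤ chainDist ε (x b) z + ENNReal.ofReal (dist z y) :=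
              le_trans (chainDist_triangle ε (x b) z y)
                (add_le_add_right (chainDist_le_of_dist_le (by rw [dist_comm]; exact hd)) _)
            have f1 : (chainDist ε (x b) z).toReal ≤ (chainDist ε (x b) y).toReal + dist y z := by
              have := ENNReal.toReal_mono
                (ENNReal.add_ne_top.mpr ⟨hy, ENNReal.ofReal_ne_top⟩) e1
              rwa [ENNReal.toReal_add hy ENNReal.ofReal_ne_top,
                ENNReal.toReal_ofReal dist_nonneg] at this
            have f2 : (chainDist ε (x b) y).toReal ≤ (chainDist ε (x b) z).toReal + dist z y := by
              have := ENNReal.toReal_mono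
                (ENNReal.add_ne_top.mpr ⟨hz, ENNReal.ofReal_ne_top⟩) e2
              rwa [ENNReal.toReal_add hz ENNReal.ofReal_ne_top,
                ENNReal.toReal_ofReal dist_nonneg] at this
            rw [dist_comm z y] at f2
            constructor <;> linarith
          calc dist (g ((chainDist ε (x b) y).toReal)) (g ((chainDist ε (x b) z).toReal))
              ≤ 2 * K * dist ((chainDist ε (x b) y).toReal) ((chainDist ε (x b) z).toReal) :=
                hg1 _ _
            _ ≤ 2 * K * dist y z := mul_le_mul_of_nonneg_left key (by linarith)
      refine ⟨Set.range φ, Set.infinite_range_of_injective hφinj, f, hUC, ?_⟩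
      rintro n ⟨k, rfl⟩
      rw [hfpos _ (hfin k)]
      exact hg2 k


end Stmt12
end

section
/- Let X be a bounded complete metric space, E and F Banach spaces, and Ξ: X × E → F a function such that x ↦ Ξ(x, f(x)) is a Lipschitz function for every f ∈ Lip(X,E). If x₀ is an accumulation point of X, then there exists a dense open subset O of E such that the map Ξ(x₀,·): E → F is continuous at every point of O. -/
open Topology Filter

namespace Stmt18

set_option linter.unusedSectionVars false

section Aux

/-- Disjoint bumps construction: a Lipschitz function prescribed at separated points. -/
lemma bump {X E : Type*} [MetricSpace X] [NormedAddCommGroup E] [NormedSpace ℝ E]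
    (a : ℕ → X) (r : ℕ → ℝ) (hr : ∀ k, 0 < r k)
    (hsep : ∀ j k, j ≠ k → r j + r k ≤ dist (a j) (a k))
    (u : E) (p : ℕ → E) (hp : ∀ k, ‖p k - u‖ ≤ 4 * r k) :
    ∃ f : X → E, LipschitzWith 8 f ∧
      (∀ z : X, (∀ k, r k ≤ dist z (a k)) → f z = u) ∧ (∀ k, f (a k) = p k) := by
  classical
  set f : X → E := fun z =>
    if h : ∃ k, dist z (a k) < r k then
      u + (1 - dist z (a h.choose) / r h.choose) • (p h.choose - u)
    else u with hf
  have huniq : ∀ z j k, dist z (a j) < r j → dist z (a k) < r k → j = k := by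
    intro z j k hj hk
    by_contra hne
    have h1 := hsep j k hne
    have h2 : dist (a j) (a k) ≤ dist z (a j) + dist z (a k) := by
      rw [dist_comm z (a j)]; exact dist_triangle _ _ _
    linarith
  have hval : ∀ z k, dist z (a k) < r k →
      f z = u + (1 - dist z (a k) / r k) • (p k - u) := by
    intro z k hz
    have h : ∃ k, dist z (a k) < r k := ⟨k, hz⟩
    have hk : h.choose = k := huniq z h.choose k h.choose_spec hz
    simp only [hf, dif_pos h, hk]
  have hout : ∀ z, (∀ k, r k ≤ dist z (a k)) → f z = u := by
    intro z hz
    have h : ¬ ∃ k, dist z (a k) < r k := by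
      push_neg; exact hz
    simp only [hf, dif_neg h]
  have hnorm : ∀ z k, dist z (a k) < r k → ‖f z - u‖ ≤ 4 * (r k - dist z (a k)) := by
    intro z k hz
    rw [hval z k hz]
    have hrk := hr k
    have h1 : 0 ≤ 1 - dist z (a k) / r k := by
      have := (div_le_one hrk).2 hz.le; linarith
    rw [add_sub_cancel_left, norm_smul, Real.norm_eq_abs, abs_of_nonneg h1]
    calc (1 - dist z (a k) / r k) * ‖p k - u‖
        ≤ (1 - dist z (a k) / r k) * (4 * r k) := mul_le_mul_of_nonneg_left (hp k) h1
      _ = 4 * (r k - dist z (a k)) := by field_simp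
  refine ⟨f, ?_, hout, ?_⟩
  · apply LipschitzWith.of_dist_le_mul
    intro z z'
    have hcoe : ((8 : NNReal) : ℝ) = 8 := by norm_num
    rw [dist_eq_norm, hcoe]
    have hdd := dist_nonneg (x := z) (y := z')
    by_cases h : ∃ k, dist z (a k) < r k
    · obtain ⟨k, hk⟩ := h
      by_cases h' : ∃ k', dist z' (a k') < r k'
      · obtain ⟨k', hk'⟩ := h'
        by_cases hkk : k = k'
        · subst hkk
          rw [hval z k hk, hval z' k hk']
          have heq : u + (1 - dist z (a k) / r k) • (p k - u)
              - (u + (1 - dist z' (a k) / r k) • (p k - u))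
              = ((dist z' (a k) - dist z (a k)) / r k) • (p k - u) := by
            rw [add_sub_add_left_eq_sub, ← sub_smul]
            congr 1
            rw [sub_div]
            ring
          rw [heq, norm_smul, Real.norm_eq_abs, abs_div, abs_of_pos (hr k)]
          have habs : |dist z' (a k) - dist z (a k)| ≤ dist z z' := by
            rw [dist_comm z z']; exact abs_dist_sub_le z' z (a k)
          have hrne : r k ≠ 0 := (hr k).ne'
          calc |dist z' (a k) - dist z (a k)| / r k * ‖p k - u‖
              ≤ dist z z' / r k * (4 * r k) :=
                mul_le_mul (by gcongr; exact (hr k).le) (hp k) (norm_nonneg _) (div_nonneg dist_nonneg (hr k).le)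
            _ = 4 * dist z z' := by field_simp
            _ ≤ 8 * dist z z' := by linarith
        · have hz'k : r k ≤ dist z' (a k) := by
            by_contra hc; push_neg at hc; exact hkk (huniq z' k k' hc hk')
          have hzk' : r k' ≤ dist z (a k') := by
            by_contra hc; push_neg at hc; exact (hkk (huniq z k k' hk hc)).elim
          have e1 : ‖f z - u‖ ≤ 4 * dist z z' := by
            have := hnorm z k hk
            have htr : dist z' (a k) ≤ dist z' z + dist z (a k) := dist_triangle _ _ _
            have : r k - dist z (a k) ≤ dist z z' := by
              rw [dist_comm z z']; linarith
            linarith [hnorm z k hk]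
          have e2 : ‖f z' - u‖ ≤ 4 * dist z z' := by
            have htr : dist z (a k') ≤ dist z z' + dist z' (a k') := dist_triangle _ _ _
            have : r k' - dist z' (a k') ≤ dist z z' := by linarith
            linarith [hnorm z' k' hk']
          calc ‖f z - f z'‖ = ‖(f z - u) - (f z' - u)‖ := by abel_nf
            _ ≤ ‖f z - u‖ + ‖f z' - u‖ := norm_sub_le _ _
            _ ≤ 8 * dist z z' := by linarith
      · push_neg at h'
        rw [hout z' h']
        have htr : dist z' (a k) ≤ dist z' z + dist z (a k) := dist_triangle _ _ _
        have : r k - dist z (a k) ≤ dist z z' := by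
          have := h' k; rw [dist_comm z z']; linarith
        calc ‖f z - u‖ ≤ 4 * (r k - dist z (a k)) := hnorm z k hk
          _ ≤ 8 * dist z z' := by linarith
    · push_neg at h
      rw [hout z h]
      by_cases h' : ∃ k', dist z' (a k') < r k'
      · obtain ⟨k', hk'⟩ := h'
        have htr : dist z (a k') ≤ dist z z' + dist z' (a k') := dist_triangle _ _ _
        have : r k' - dist z' (a k') ≤ dist z z' := by
          have := h k'; linarith
        calc ‖u - f z'‖ = ‖f z' - u‖ := norm_sub_rev _ _
          _ ≤ 4 * (r k' - dist z' (a k')) := hnorm z' k' hk'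
          _ ≤ 8 * dist z z' := by linarith
      · push_neg at h'
        rw [hout z' h']
        rw [sub_self, norm_zero]
        positivity
  · intro k
    have hz : dist (a k) (a k) < r k := by rw [dist_self]; exact hr k
    rw [hval (a k) k hz]
    simp


variable {X E F : Type*} [MetricSpace X]
    [NormedAddCommGroup E] [NormedSpace ℝ E]
    [NormedAddCommGroup F] [NormedSpace ℝ F]

/-- The closed sets used in the Baire category argument. -/
def Sset (Ξ : X × E → F) (x₀ : X) (n : ℕ) : Set E :=
  {c | ∀ x : X, 0 < dist x x₀ → dist x x₀ ≤ 1/((n:ℝ)+1) → ∀ v w : E,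
    ‖v - c‖ < dist x x₀ → ‖w - c‖ < dist x x₀ →
    ‖Ξ (x, v) - Ξ (x, w)‖ ≤ ((n:ℝ)+1) * dist x x₀}

lemma isClosed_Sset (Ξ : X × E → F) (x₀ : X) (n : ℕ) : IsClosed (Sset Ξ x₀ n) := by
  apply isClosed_of_closure_subset
  intro c hc x hx1 hx2 v w hv hw
  have hmax : max ‖v - c‖ ‖w - c‖ < dist x x₀ := max_lt hv hw
  obtain ⟨c', hc'S, hcc'⟩ := Metric.mem_closure_iff.mp hc
    (dist x x₀ - max ‖v - c‖ ‖w - c‖) (by linarith)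
  apply hc'S x hx1 hx2 v w
  · calc ‖v - c'‖ = dist v c' := (dist_eq_norm _ _).symm
      _ ≤ dist v c + dist c c' := dist_triangle _ _ _
      _ = ‖v - c‖ + dist c c' := by rw [dist_eq_norm]
      _ < dist x x₀ := by
          have := le_max_left ‖v - c‖ ‖w - c‖; linarith
  · calc ‖w - c'‖ = dist w c' := (dist_eq_norm _ _).symm
      _ ≤ dist w c + dist c c' := dist_triangle _ _ _
      _ = ‖w - c‖ + dist c c' := by rw [dist_eq_norm]
      _ < dist x x₀ := by
          have := le_max_right ‖v - c‖ ‖w - c‖; linarith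

lemma covering (Ξ : X × E → F)
    (hΞ : ∀ f : X → E, (∃ K : NNReal, LipschitzWith K f) →
      ∃ K : NNReal, LipschitzWith K fun x => Ξ (x, f x))
    (x₀ : X) (u : E) : ∃ n, u ∈ Sset Ξ x₀ n := by
  by_contra hcon
  push_neg at hcon
  have H : ∀ n : ℕ, ∃ x : X, ∃ v w : E, 0 < dist x x₀ ∧ dist x x₀ ≤ 1/((n:ℝ)+1) ∧
      ‖v - u‖ < dist x x₀ ∧ ‖w - u‖ < dist x x₀ ∧
      ((n:ℝ)+1) * dist x x₀ < ‖Ξ (x, v) - Ξ (x, w)‖ := by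
    intro n
    have h := hcon n
    simp only [Sset, Set.mem_setOf_eq] at h
    push_neg at h
    obtain ⟨x, hx1, hx2, v, w, hv, hw, hb⟩ := h
    exact ⟨x, v, w, hx1, hx2, hv, hw, hb⟩
  choose x v w h1 h2 h3 h4 h5 using H
  set s : ℕ → ℝ := fun n => dist (x n) x₀ with hs
  have hex : ∀ m : ℕ, ∃ M : ℕ, 1/((M:ℝ)+1) < s m / 2 :=
    fun m => exists_nat_one_div_lt (half_pos (h1 m))
  let g : ℕ → ℕ := fun m => (hex m).choose
  let φ : ℕ → ℕ := fun k => Nat.rec 0 (fun _ prev => max (prev + 1) (g prev)) k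
  have hφs : ∀ k, φ (k+1) = max (φ k + 1) (g (φ k)) := fun _ => rfl
  have hφmono : ∀ k, φ k < φ (k+1) := fun k => by
    rw [hφs]; exact lt_of_lt_of_le (Nat.lt_succ_self _) (le_max_left _ _)
  have hφge : ∀ k, k ≤ φ k := by
    intro k
    induction k with
    | zero => exact Nat.zero_le _
    | succ k ih => exact Nat.succ_le_of_lt (lt_of_le_of_lt ih (hφmono k))
  have hhalf : ∀ k, s (φ (k+1)) < s (φ k) / 2 := by
    intro k
    have hg : 1/((g (φ k) : ℝ)+1) < s (φ k) / 2 := (hex (φ k)).choose_spec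
    have hle : (g (φ k) : ℝ) + 1 ≤ (φ (k+1) : ℝ) + 1 := by
      have h : g (φ k) ≤ φ (k+1) := by rw [hφs]; exact le_max_right _ _
      have : (g (φ k) : ℝ) ≤ (φ (k+1) : ℝ) := by exact_mod_cast h
      linarith
    calc s (φ (k+1)) ≤ 1/((φ (k+1):ℝ)+1) := h2 _
      _ ≤ 1/((g (φ k):ℝ)+1) := by
          apply one_div_le_one_div_of_le (by positivity) hle
      _ < s (φ k) / 2 := hg
  have hlt : ∀ j k, j < k → s (φ k) < s (φ j) / 2 := by
    intro j k hjk
    induction k with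
    | zero => omega
    | succ k ih =>
      rcases Nat.lt_succ_iff_lt_or_eq.mp hjk with h | h
      · have e1 := ih h
        have e2 := hhalf k
        have e3 := h1 (φ j)
        linarith
      · subst h; exact hhalf j
  set a : ℕ → X := fun k => x (φ k) with ha
  set r : ℕ → ℝ := fun k => s (φ k) / 4 with hrdef
  have hr : ∀ k, 0 < r k := fun k => div_pos (h1 _) (by norm_num)
  have hsep : ∀ j k, j ≠ k → r j + r k ≤ dist (a j) (a k) := by
    have key : ∀ j k, j < k → r j + r k ≤ dist (a j) (a k) := by
      intro j k hjk
      have hd : s (φ j) ≤ dist (a j) (a k) + s (φ k) := by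
        calc s (φ j) = dist (x (φ j)) x₀ := rfl
          _ ≤ dist (x (φ j)) (x (φ k)) + dist (x (φ k)) x₀ := dist_triangle _ _ _
          _ = dist (a j) (a k) + s (φ k) := rfl
      have e1 := hlt j k hjk
      have e2 := h1 (φ k)
      simp only [hrdef]
      linarith
    intro j k hjk
    rcases lt_or_gt_of_ne hjk with h | h
    · exact key j k h
    · rw [dist_comm]; linarith [key k j h]
  have hx₀out : ∀ k, r k ≤ dist x₀ (a k) := by
    intro k
    rw [dist_comm]
    have := h1 (φ k)
    simp only [hrdef]
    calc s (φ k) / 4 ≤ s (φ k) := by linarith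
      _ = dist (a k) x₀ := rfl
  obtain ⟨f, hfL, hfout, hfval⟩ := bump a r hr hsep u (fun k => v (φ k))
    (fun k => by
      have := h3 (φ k)
      simp only [hrdef]
      have hh : (dist (x (φ k)) x₀ : ℝ) = s (φ k) := rfl
      linarith [h3 (φ k)])
  obtain ⟨fw, hwL, hwout, hwval⟩ := bump a r hr hsep u (fun k => w (φ k))
    (fun k => by
      simp only [hrdef]
      linarith [h4 (φ k)])
  have hfx₀ : f x₀ = u := hfout x₀ hx₀out
  have hwx₀ : fw x₀ = u := hwout x₀ hx₀out
  obtain ⟨Kf, hKf⟩ := hΞ f ⟨8, hfL⟩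
  obtain ⟨Kg, hKg⟩ := hΞ fw ⟨8, hwL⟩
  obtain ⟨k, hk⟩ := exists_nat_gt ((Kf : ℝ) + (Kg : ℝ))
  have e1 : dist (Ξ (a k, v (φ k))) (Ξ (x₀, u)) ≤ (Kf : ℝ) * s (φ k) := by
    have h := hKf.dist_le_mul (a k) x₀
    rw [hfval k, hfx₀] at h
    exact h
  have e2 : dist (Ξ (a k, w (φ k))) (Ξ (x₀, u)) ≤ (Kg : ℝ) * s (φ k) := by
    have h := hKg.dist_le_mul (a k) x₀
    rw [hwval k, hwx₀] at h
    exact h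
  have hb := h5 (φ k)
  have echain : ((Nat.cast (φ k) : ℝ)+1) * s (φ k) < ((Kf:ℝ) + Kg) * s (φ k) := by
    calc ((Nat.cast (φ k) : ℝ)+1) * s (φ k) < ‖Ξ (x (φ k), v (φ k)) - Ξ (x (φ k), w (φ k))‖ := hb
      _ = dist (Ξ (a k, v (φ k))) (Ξ (a k, w (φ k))) := (dist_eq_norm _ _).symm
      _ ≤ dist (Ξ (a k, v (φ k))) (Ξ (x₀, u)) + dist (Ξ (x₀, u)) (Ξ (a k, w (φ k))) :=
          dist_triangle _ _ _
      _ ≤ (Kf : ℝ) * s (φ k) + (Kg : ℝ) * s (φ k) := by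
          rw [dist_comm (Ξ (x₀, u))]
          linarith
      _ = ((Kf:ℝ) + Kg) * s (φ k) := by ring
  have hlt2 : ((Nat.cast (φ k) : ℝ)+1) < (Kf:ℝ) + Kg := lt_of_mul_lt_mul_right echain (h1 (φ k)).le
  have hge : ((k:ℕ):ℝ) ≤ (Nat.cast (φ k) : ℝ) := Nat.cast_le.mpr (hφge k)
  linarith

section Cont

variable {X E F : Type*} [MetricSpace X]
    [NormedAddCommGroup E] [NormedSpace ℝ E]
    [NormedAddCommGroup F] [NormedSpace ℝ F]

set_option maxHeartbeats 1600000 in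
lemma lipschitz_on_ball (Ξ : X × E → F) (x₀ : X)
    (hconst : ∀ vv : E, ∃ K : NNReal, ∀ x y : X,
      dist (Ξ (x, vv)) (Ξ (y, vv)) ≤ (K:ℝ) * dist x y)
    (hacc : ∀ δ : ℝ, 0 < δ → ∃ x : X, 0 < dist x x₀ ∧ dist x x₀ < δ)
    (n : ℕ) (u : E) (ρ : ℝ) (hρ : 0 < ρ) (hball : Metric.ball u ρ ⊆ Sset Ξ x₀ n)
    (v' w' : E) (hv' : ‖v' - u‖ < ρ/2) (hw' : ‖w' - u‖ < ρ/2) :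
    ‖Ξ (x₀, v') - Ξ (x₀, w')‖ ≤ ((n:ℝ)+1) * ‖v' - w'‖ := by
  obtain ⟨Kv, hKv⟩ := hconst v'
  obtain ⟨Kw, hKw⟩ := hconst w'
  have key : ∀ ε : ℝ, 0 < ε → ‖Ξ (x₀, v') - Ξ (x₀, w')‖ ≤ ((n:ℝ)+1) * ‖v' - w'‖ + ε := by
    intro ε hε
    set τ := ‖v' - w'‖ with hτdef
    have hτ0 : 0 ≤ τ := norm_nonneg _
    have hC : (0:ℝ) < (Kv:ℝ) + Kw + n + 2 := by positivity
    obtain ⟨xx, hx1, hx2⟩ := hacc (min (1/((n:ℝ)+1)) (ε / ((Kv:ℝ) + Kw + n + 2)))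
      (lt_min (by positivity) (by positivity))
    set d := dist xx x₀ with hddef
    have hd1 : d ≤ 1/((n:ℝ)+1) := le_of_lt (lt_of_lt_of_le hx2 (min_le_left _ _))
    have hd2 : d < ε / ((Kv:ℝ)+Kw+n+2) := lt_of_lt_of_le hx2 (min_le_right _ _)
    set N : ℕ := ⌊τ / d⌋₊ + 1 with hNdef
    have hNR : (0:ℝ) < (N:ℝ) := by positivity
    have hτN : τ < (N:ℝ) * d := by
      have h := Nat.lt_floor_add_one (τ / d)
      have : τ / d < (N:ℝ) := by rw [hNdef]; push_cast; linarith
      calc τ = (τ / d) * d := by field_simp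
        _ < (N:ℝ) * d := by exact mul_lt_mul_of_pos_right this hx1
    have hNd : (N:ℝ) * d ≤ τ + d := by
      have h := Nat.floor_le (show (0:ℝ) ≤ τ/d by positivity)
      have h2 : (N:ℝ) ≤ τ/d + 1 := by rw [hNdef]; push_cast; linarith
      calc (N:ℝ)*d ≤ (τ/d + 1)*d := mul_le_mul_of_nonneg_right h2 hx1.le
        _ = τ + d := by field_simp
    set P : ℕ → E := fun i => v' + ((i:ℝ)/(N:ℝ)) • (w' - v') with hP
    have hPball : ∀ i, i ≤ N → ‖P i - u‖ < ρ := by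
      intro i hi
      set t : ℝ := (i:ℝ)/(N:ℝ) with ht
      have ht0 : 0 ≤ t := by positivity
      have ht1 : t ≤ 1 := by
        rw [ht]
        apply div_le_one_of_le₀ (by exact_mod_cast hi) hNR.le
      have hPd : P i - u = (1 - t) • (v' - u) + t • (w' - u) := by
        simp only [hP, ht]
        module
      rw [hPd]
      have b1 : ‖(1 - t) • (v' - u)‖ = (1 - t) * ‖v' - u‖ := by
        rw [norm_smul, Real.norm_eq_abs, abs_of_nonneg (by linarith)]
      have b2 : ‖t • (w' - u)‖ = t * ‖w' - u‖ := by
        rw [norm_smul, Real.norm_eq_abs, abs_of_nonneg ht0]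
      calc ‖(1 - t) • (v' - u) + t • (w' - u)‖
          ≤ ‖(1 - t) • (v' - u)‖ + ‖t • (w' - u)‖ := norm_add_le _ _
        _ = (1 - t) * ‖v' - u‖ + t * ‖w' - u‖ := by rw [b1, b2]
        _ < ρ := by nlinarith [norm_nonneg (v' - u), norm_nonneg (w' - u)]
    have hstep : ∀ i, i < N → dist (Ξ (xx, P i)) (Ξ (xx, P (i+1))) ≤ ((n:ℝ)+1) * d := by
      intro i hiN
      have hmem : P i ∈ Sset Ξ x₀ n := hball (by
        rw [Metric.mem_ball, dist_eq_norm]; exact hPball i hiN.le)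
      simp only [Sset, Set.mem_setOf_eq] at hmem
      have hstepnorm : ‖P (i+1) - P i‖ < d := by
        have heq : P (i+1) - P i = ((1:ℝ)/(N:ℝ)) • (w' - v') := by
          simp only [hP]
          rw [add_sub_add_left_eq_sub, ← sub_smul]
          congr 1
          push_cast
          ring
        rw [heq, norm_smul, Real.norm_eq_abs, abs_of_pos (by positivity), norm_sub_rev]
        rw [div_mul_eq_mul_div, one_mul, div_lt_iff₀ hNR]
        calc τ < (N:ℝ) * d := hτN
          _ = d * (N:ℝ) := by ring
      rw [dist_eq_norm]
      exact hmem xx hx1 hd1 (P i) (P (i+1))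
        (by rw [sub_self, norm_zero]; exact hx1)
        (by rw [← norm_sub_rev] at hstepnorm ⊢; exact hstepnorm)
    have h0 : P 0 = v' := by simp [hP]
    have hN' : P N = w' := by
      simp only [hP]
      rw [div_self (ne_of_gt hNR), one_smul]
      abel
    have hmid : dist (Ξ (xx, v')) (Ξ (xx, w')) ≤ ((n:ℝ)+1) * (τ + d) := by
      calc dist (Ξ (xx, v')) (Ξ (xx, w')) = dist (Ξ (xx, P 0)) (Ξ (xx, P N)) := by
            rw [h0, hN']
        _ ≤ ∑ i ∈ Finset.range N, dist (Ξ (xx, P i)) (Ξ (xx, P (i+1))) :=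
            dist_le_range_sum_dist (fun i => Ξ (xx, P i)) N
        _ ≤ ∑ _i ∈ Finset.range N, ((n:ℝ)+1) * d :=
            Finset.sum_le_sum (fun i hi => hstep i (Finset.mem_range.1 hi))
        _ = (N:ℝ) * (((n:ℝ)+1) * d) := by
            rw [Finset.sum_const, Finset.card_range, nsmul_eq_mul]
        _ = ((n:ℝ)+1) * ((N:ℝ) * d) := by ring
        _ ≤ ((n:ℝ)+1) * (τ + d) := by
            apply mul_le_mul_of_nonneg_left hNd (by positivity)
    have hend1 : dist (Ξ (x₀, v')) (Ξ (xx, v')) ≤ (Kv:ℝ) * d := by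
      have h := hKv x₀ xx
      rwa [dist_comm x₀ xx] at h
    have hend2 : dist (Ξ (xx, w')) (Ξ (x₀, w')) ≤ (Kw:ℝ) * d := hKw xx x₀
    have hdε : ((Kv:ℝ)+Kw+(n:ℝ)+1)*d ≤ ε := by
      have h3 : d * ((Kv:ℝ)+Kw+n+2) < ε := (lt_div_iff₀ hC).mp hd2
      nlinarith [dist_nonneg (x := xx) (y := x₀)]
    calc ‖Ξ (x₀, v') - Ξ (x₀, w')‖ = dist (Ξ (x₀, v')) (Ξ (x₀, w')) := (dist_eq_norm _ _).symm
      _ ≤ dist (Ξ (x₀, v')) (Ξ (xx, v')) + dist (Ξ (xx, v')) (Ξ (xx, w'))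
          + dist (Ξ (xx, w')) (Ξ (x₀, w')) := dist_triangle4 _ _ _ _
      _ ≤ (Kv:ℝ)*d + ((n:ℝ)+1)*(τ+d) + (Kw:ℝ)*d := by linarith
      _ = ((n:ℝ)+1)*τ + ((Kv:ℝ)+Kw+(n:ℝ)+1)*d := by ring
      _ ≤ ((n:ℝ)+1)*τ + ε := by linarith
  exact le_of_forall_sub_le (fun ε hε => by linarith [key ε hε])

end Cont

end Aux

/-- If `Ξ : X × E → F` is a Lipschitz section (i.e. `x ↦ Ξ(x, f(x))` is Lipschitz for every
Lipschitz `f`) and `x₀` is an accumulation point of `X`, then `Ξ(x₀,·)` is continuous on a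
dense open subset of `E`. -/
theorem stmt18 {X E F : Type*} [MetricSpace X] [CompleteSpace X]
    (hXbdd : Bornology.IsBounded (Set.univ : Set X))
    [NormedAddCommGroup E] [NormedSpace ℝ E] [CompleteSpace E]
    [NormedAddCommGroup F] [NormedSpace ℝ F] [CompleteSpace F]
    (Ξ : X × E → F)
    (hΞ : ∀ f : X → E, (∃ K : NNReal, LipschitzWith K f) →
      ∃ K : NNReal, LipschitzWith K fun x => Ξ (x, f x))
    (x₀ : X) (hx₀ : 𝓝[≠] x₀ ≠ ⊥) :
    ∃ O : Set E, IsOpen O ∧ Dense O ∧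
      ∀ u ∈ O, ContinuousAt (fun e => Ξ (x₀, e)) u := by
  have hconst : ∀ vv : E, ∃ K : NNReal, ∀ x y : X,
      dist (Ξ (x, vv)) (Ξ (y, vv)) ≤ (K:ℝ) * dist x y := by
    intro vv
    obtain ⟨K, hK⟩ := hΞ (fun _ => vv) ⟨0, LipschitzWith.const vv⟩
    exact ⟨K, fun x y => hK.dist_le_mul x y⟩
  haveI : (𝓝[≠] x₀).NeBot := ⟨hx₀⟩
  have hacc : ∀ δ : ℝ, 0 < δ → ∃ x : X, 0 < dist x x₀ ∧ dist x x₀ < δ := by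
    intro δ hδ
    have hmem : Metric.ball x₀ δ ∩ {x₀}ᶜ ∈ 𝓝[≠] x₀ :=
      inter_mem (mem_nhdsWithin_of_mem_nhds (Metric.ball_mem_nhds _ hδ)) self_mem_nhdsWithin
    obtain ⟨x, hx1, hx2⟩ := Filter.nonempty_of_mem hmem
    exact ⟨x, dist_pos.2 hx2, Metric.mem_ball.1 hx1⟩
  have hcover : ⋃ n, Sset Ξ x₀ n = Set.univ :=
    Set.eq_univ_of_forall fun u => Set.mem_iUnion.2 (covering Ξ hΞ x₀ u)
  refine ⟨⋃ n, interior (Sset Ξ x₀ n), isOpen_iUnion (fun _ => isOpen_interior),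
    dense_iUnion_interior_of_closed (fun n => isClosed_Sset Ξ x₀ n) hcover, ?_⟩
  intro u hu
  obtain ⟨n, hun⟩ := Set.mem_iUnion.mp hu
  obtain ⟨ρ, hρ, hball⟩ := Metric.mem_nhds_iff.mp (mem_interior_iff_mem_nhds.mp hun)
  rw [Metric.continuousAt_iff]
  intro ε hε
  refine ⟨min (ρ/2) (ε/((n:ℝ)+2)), lt_min (by positivity) (by positivity), fun v hv => ?_⟩
  rw [dist_eq_norm] at hv ⊢
  have h1 : ‖v - u‖ < ρ/2 := lt_of_lt_of_le hv (min_le_left _ _)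
  have h2 : ‖u - u‖ < ρ/2 := by rw [sub_self, norm_zero]; positivity
  have h3 := lipschitz_on_ball Ξ x₀ hconst hacc n u ρ hρ hball v u h1 h2
  have h4 : ‖v - u‖ < ε/((n:ℝ)+2) := lt_of_lt_of_le hv (min_le_right _ _)
  have h5 : ((n:ℝ)+1) * ‖v - u‖ < ((n:ℝ)+1) * (ε/((n:ℝ)+2)) :=
    mul_lt_mul_of_pos_left h4 (by positivity)
  have h6 : ((n:ℝ)+1) * (ε/((n:ℝ)+2)) < ε := by
    have hlt1 : ((n:ℝ)+1)/((n:ℝ)+2) < 1 := (div_lt_one (by positivity)).2 (by linarith)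
    calc ((n:ℝ)+1)*(ε/((n:ℝ)+2)) = (((n:ℝ)+1)/((n:ℝ)+2))*ε := by ring
      _ < 1*ε := mul_lt_mul_of_pos_right hlt1 hε
      _ = ε := one_mul ε
  linarith

end Stmt18
end
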